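/- Let X ⊂ P^n_k be a set of r distinct points such that R/I(X) is Gorenstein with socle degree s, and let z be a linear nonzerodivisor on R/I(X). If F ∈ Γ is a homogeneous form of degree s with F ∈ I(X)^⊥ and z ∘ F = 0, and dim_k (R ∘ F) ≥ r, then R ∘ F = (I(X) + (z))^⊥ and dim_k (R ∘ F) = r. -/

import Mathlib

open MvPolynomial
open scoped Classical

noncomputable section

variable {k : Type} [Field k]

/-- Apolarity action: `apol f F = f(∂/∂y) F`, defined on monomials by
`x^α ∘ y^β = (β!/(β-α)!) y^(β-α)` if `α ≤ β` and `0` otherwise. -/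
def apol {n : ℕ} (f F : MvPolynomial (Fin n) k) : MvPolynomial (Fin n) k :=
  (AddMonoidAlgebra.coeff f).sum fun α c => (AddMonoidAlgebra.coeff F).sum fun β b =>
    if α ≤ β then
      MvPolynomial.monomial (β - α)
        (c * b * (β.prod fun i m => ((m.descFactorial (α i) : k))))
    else 0

/-- The linear form `a₀ y₀ + ⋯ + aₙ yₙ` associated to a point with coordinates `a`. -/
def dualLin {n : ℕ} (a : Fin n → k) : MvPolynomial (Fin n) k :=
  ∑ j, MvPolynomial.C (a j) * MvPolynomial.X j

/-- Macaulay inverse system of a set of polynomials. -/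
def perp {n : ℕ} (S : Set (MvPolynomial (Fin n) k)) : Set (MvPolynomial (Fin n) k) :=
  {F | ∀ g ∈ S, apol g F = 0}

/-- The `R`-submodule of `Γ` generated by `S` (as the `k`-span of the apolarity orbit). -/
def Rspan {n : ℕ} (S : Set (MvPolynomial (Fin n) k)) : Submodule k (MvPolynomial (Fin n) k) :=
  Submodule.span k {G | ∃ g, ∃ F ∈ S, G = apol g F}

/-- The homogeneous vanishing ideal of a family of points (given by affine representatives). -/
def projIdeal {n r : ℕ} (a : Fin r → Fin n → k) : Ideal (MvPolynomial (Fin n) k) :=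
  ⨅ i, ⨅ t : k, RingHom.ker (MvPolynomial.eval (t • a i))

/-- Hilbert function of `R/I`: `dim R_j − dim I_j`. -/
def HF {n : ℕ} (I : Ideal (MvPolynomial (Fin n) k)) (j : ℕ) : ℕ :=
  Module.finrank k (homogeneousSubmodule (Fin n) k j)
    - Module.finrank k
        (Submodule.restrictScalars k I ⊓ homogeneousSubmodule (Fin n) k j : Submodule k _)

/-- `s` is the socle degree: least integer with `HF I t = r` for all `t ≥ s`. -/
def IsSocleDegree {n : ℕ} (I : Ideal (MvPolynomial (Fin n) k)) (r s : ℕ) : Prop :=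
  (∀ t, s ≤ t → HF I t = r) ∧ ∀ s', (∀ t, s' ≤ t → HF I t = r) → s ≤ s'

/-- The affine representatives define distinct points of projective space. -/
def ProjDistinct {n r : ℕ} (a : Fin r → Fin n → k) : Prop :=
  (∀ i, a i ≠ 0) ∧ ∀ i j, i ≠ j → ∀ c : k, a i ≠ c • a j

/-- G-admissibility (with `F 0` playing the role of `F₁`). -/
def GAdmissible {n : ℕ} (z : MvPolynomial (Fin n) k) (F : ℕ → MvPolynomial (Fin n) k) : Prop :=
  apol z (F 0) = 0 ∧ (∀ l, apol z (F (l + 1)) = F l) ∧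
  ∀ l, (fun g => apol g (F (l + 1))) '' {g | ∀ G ∈ (Rspan {F l} : Submodule k (MvPolynomial (Fin n) k)), apol g G = 0}
      = ((Rspan {F 0} : Submodule k (MvPolynomial (Fin n) k)) : Set (MvPolynomial (Fin n) k))

/-- The family `F_t = (1/(t+u)!) Σ αᵢ Lᵢ^{t+u}`. -/
def famF {n r : ℕ} (a : Fin r → Fin n → k) (α : Fin r → k) (u t : ℕ) :
    MvPolynomial (Fin n) k :=
  (((t + u).factorial : k))⁻¹ • ∑ i, MvPolynomial.C (α i) * dualLin (a i) ^ (t + u)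

/-- `X` is arithmetically Gorenstein, tested with the linear nonzerodivisor `z`:
the inverse system of the Artinian reduction `I(X)+(z)` is cyclic. -/
def IsArithGorAt {n r : ℕ} (a : Fin r → Fin n → k) (z : MvPolynomial (Fin n) k) : Prop :=
  ∃ F, perp ((projIdeal a ⊔ Ideal.span {z} : Ideal _) : Set (MvPolynomial (Fin n) k))
    = ((Rspan {F} : Submodule k (MvPolynomial (Fin n) k)) : Set (MvPolynomial (Fin n) k))

/-- `X` is arithmetically Gorenstein (for some linear form not vanishing at any point). -/
def IsArithGor {n r : ℕ} (a : Fin r → Fin n → k) : Prop :=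
  ∃ b : Fin n → k, (∀ i, (∑ j, b j * a i j) ≠ 0) ∧ IsArithGorAt a (dualLin b)


namespace ApolAux

variable {n : ℕ}

/-- `dfp α β = ∏ (β i) desc (α i)` as a natural number. -/
def dfp (α β : Fin n →₀ ℕ) : ℕ := ∏ i, (β i).descFactorial (α i)

lemma dfp_eq_zero {α β : Fin n →₀ ℕ} (h : ¬ α ≤ β) : dfp α β = 0 := by
  obtain ⟨i, hi⟩ : ∃ i, β i < α i := by
    by_contra hc; push_neg at hc; exact h fun j => hc j
  exact Finset.prod_eq_zero (Finset.mem_univ i) (Nat.descFactorial_eq_zero_iff_lt.mpr hi)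

lemma prod_eq_dfp (α β : Fin n →₀ ℕ) (h : α ≤ β) :
    (β.prod fun i m => ((m.descFactorial (α i) : k))) = ((dfp α β : ℕ) : k) := by
  rw [Finsupp.prod, dfp, Nat.cast_prod]
  refine Finset.prod_subset (Finset.subset_univ _) ?_
  intro i _ hi
  have hb : β i = 0 := Finsupp.notMem_support_iff.mp hi
  have ha : α i = 0 := Nat.le_zero.mp (hb ▸ h i)
  simp [ha, hb]

lemma ite_eq_dfp (α β : Fin n →₀ ℕ) (c b : k) :
    (if α ≤ β then
      MvPolynomial.monomial (β - α)
        (c * b * (β.prod fun i m => ((m.descFactorial (α i) : k))))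
    else 0) = monomial (β - α) (c * b * ((dfp α β : ℕ) : k)) := by
  by_cases h : α ≤ β
  · rw [if_pos h, prod_eq_dfp α β h]
  · rw [if_neg h, dfp_eq_zero h]; simp

lemma apol_eq_sum_supp (f F : MvPolynomial (Fin n) k) :
    apol f F = ∑ α ∈ f.support, ∑ β ∈ F.support,
      monomial (β - α) (coeff α f * coeff β F * ((dfp α β : ℕ) : k)) := by
  unfold apol
  rw [Finsupp.sum]
  refine Finset.sum_congr rfl fun α _ => ?_
  rw [Finsupp.sum]
  exact Finset.sum_congr rfl fun β _ => ite_eq_dfp α β _ _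

lemma apol_eq_sum {f F : MvPolynomial (Fin n) k} {A B : Finset (Fin n →₀ ℕ)}
    (hA : f.support ⊆ A) (hB : F.support ⊆ B) :
    apol f F = ∑ α ∈ A, ∑ β ∈ B,
      monomial (β - α) (coeff α f * coeff β F * ((dfp α β : ℕ) : k)) := by
  rw [apol_eq_sum_supp]
  refine (Finset.sum_congr rfl fun α _ => Finset.sum_subset hB fun β _ hβ => ?_).trans
    (Finset.sum_subset hA fun α _ hα => Finset.sum_eq_zero fun β _ => ?_)
  · have : coeff β F = 0 := MvPolynomial.notMem_support_iff.mp hβ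
    rw [this]; simp
  · have : coeff α f = 0 := MvPolynomial.notMem_support_iff.mp hα
    rw [this]; simp

lemma apol_add_left (f g F : MvPolynomial (Fin n) k) :
    apol (f + g) F = apol f F + apol g F := by
  rw [apol_eq_sum (A := f.support ∪ g.support) (B := F.support)
      MvPolynomial.support_add le_rfl,
    apol_eq_sum (A := f.support ∪ g.support) (B := F.support)
      Finset.subset_union_left le_rfl,
    apol_eq_sum (A := f.support ∪ g.support) (B := F.support)
      Finset.subset_union_right le_rfl,
    ← Finset.sum_add_distrib]
  apply Finset.sum_congr rfl; intro α _
  rw [← Finset.sum_add_distrib]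
  apply Finset.sum_congr rfl; intro β _
  rw [coeff_add, add_mul, add_mul, map_add]

lemma apol_add_right (f F G : MvPolynomial (Fin n) k) :
    apol f (F + G) = apol f F + apol f G := by
  rw [apol_eq_sum (A := f.support) (B := F.support ∪ G.support)
      le_rfl MvPolynomial.support_add,
    apol_eq_sum (A := f.support) (B := F.support ∪ G.support)
      le_rfl Finset.subset_union_left,
    apol_eq_sum (A := f.support) (B := F.support ∪ G.support)
      le_rfl Finset.subset_union_right,
    ← Finset.sum_add_distrib]
  apply Finset.sum_congr rfl; intro α _
  rw [← Finset.sum_add_distrib]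
  apply Finset.sum_congr rfl; intro β _
  rw [coeff_add, mul_add, add_mul, map_add]

lemma support_smul' (c : k) (f : MvPolynomial (Fin n) k) : (c • f).support ⊆ f.support :=
  Finsupp.support_smul

lemma apol_smul_left (c : k) (f F : MvPolynomial (Fin n) k) :
    apol (c • f) F = c • apol f F := by
  rw [apol_eq_sum (A := f.support) (B := F.support) (support_smul' c f) le_rfl,
    apol_eq_sum (A := f.support) (B := F.support) le_rfl le_rfl,
    Finset.smul_sum]
  apply Finset.sum_congr rfl; intro α _
  rw [Finset.smul_sum]
  apply Finset.sum_congr rfl; intro β _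
  rw [MvPolynomial.coeff_smul, MvPolynomial.smul_monomial]
  simp only [smul_eq_mul]
  ring_nf

lemma apol_smul_right (c : k) (f F : MvPolynomial (Fin n) k) :
    apol f (c • F) = c • apol f F := by
  rw [apol_eq_sum (A := f.support) (B := F.support) le_rfl (support_smul' c F),
    apol_eq_sum (A := f.support) (B := F.support) le_rfl le_rfl,
    Finset.smul_sum]
  apply Finset.sum_congr rfl; intro α _
  rw [Finset.smul_sum]
  apply Finset.sum_congr rfl; intro β _
  rw [MvPolynomial.coeff_smul, MvPolynomial.smul_monomial]
  simp only [smul_eq_mul]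
  ring_nf

lemma apol_zero_left (F : MvPolynomial (Fin n) k) : apol 0 F = 0 := by
  unfold apol; simp

lemma apol_zero_right (f : MvPolynomial (Fin n) k) : apol f 0 = 0 := by
  rw [apol_eq_sum (A := f.support) (B := ∅) le_rfl (by simp)]
  simp

lemma apol_monomial_monomial (α β : Fin n →₀ ℕ) (c b : k) :
    apol (monomial α c) (monomial β b)
      = monomial (β - α) (c * b * ((dfp α β : ℕ) : k)) := by
  by_cases hc : c = 0
  · subst hc; rw [show (monomial α) (0:k) = 0 by simp, apol_zero_left]; simp
  by_cases hb : b = 0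
  · subst hb; rw [show (monomial β) (0:k) = 0 by simp, apol_zero_right]; simp
  rw [apol_eq_sum (A := {α}) (B := {β}) (by simp [MvPolynomial.support_monomial, hc])
    (by simp [MvPolynomial.support_monomial, hb])]
  simp [MvPolynomial.coeff_monomial]

/-- Apolarity as a bilinear map. -/
def apolLin : MvPolynomial (Fin n) k →ₗ[k] MvPolynomial (Fin n) k →ₗ[k] MvPolynomial (Fin n) k :=
  LinearMap.mk₂ k apol apol_add_left apol_smul_left apol_add_right apol_smul_right

@[simp] lemma apolLin_apply (f F : MvPolynomial (Fin n) k) : apolLin f F = apol f F := rfl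

end ApolAux

namespace ApolAux
variable {n : ℕ}

lemma dfp_mul (α γ β : Fin n →₀ ℕ) :
    dfp (α + γ) β = dfp α (β - γ) * dfp γ β := by
  rw [dfp, dfp, dfp, ← Finset.prod_mul_distrib]
  refine Finset.prod_congr rfl fun i _ => ?_
  rw [Finsupp.add_apply, Finsupp.tsub_apply, Nat.add_comm (α i) (γ i),
    ← Nat.descFactorial_mul_descFactorial (k := γ i) (m := γ i + α i) (n := β i)
      (Nat.le_add_right _ _), Nat.add_sub_cancel_left]

lemma apol_mm_mm (α γ β : Fin n →₀ ℕ) (c d b : k) :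
    apol (monomial α c * monomial γ d) (monomial β b)
      = apol (monomial α c) (apol (monomial γ d) (monomial β b)) := by
  rw [MvPolynomial.monomial_mul, apol_monomial_monomial, apol_monomial_monomial,
    apol_monomial_monomial]
  rw [tsub_add_eq_tsub_tsub_swap]
  congr 1
  rw [dfp_mul]
  push_cast
  ring

lemma apol_mul (f g F : MvPolynomial (Fin n) k) :
    apol (f * g) F = apol f (apol g F) := by
  induction f using MvPolynomial.induction_on' with
  | add p q hp hq => rw [add_mul, apol_add_left, apol_add_left, hp, hq]
  | monomial α c =>
    induction g using MvPolynomial.induction_on' with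
    | add p q hp hq => rw [mul_add, apol_add_left, apol_add_left, hp, hq, apol_add_right]
    | monomial γ d =>
      induction F using MvPolynomial.induction_on' with
      | add p q hp hq => rw [apol_add_right, apol_add_right, hp, hq, apol_add_right]
      | monomial β b => exact apol_mm_mm α γ β c d b

lemma apol_one (F : MvPolynomial (Fin n) k) : apol 1 F = F := by
  induction F using MvPolynomial.induction_on' with
  | add p q hp hq => rw [apol_add_right, hp, hq]
  | monomial β b =>
    rw [show (1 : MvPolynomial (Fin n) k) = monomial 0 1 by rfl, apol_monomial_monomial]
    have : dfp (0 : Fin n →₀ ℕ) β = 1 := by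
      rw [dfp]; apply Finset.prod_eq_one; intro i _; simp
    simp [this]

lemma degree_eq_sum_univ (β : Fin n →₀ ℕ) : β.degree = ∑ i, β i := by
  rw [Finsupp.degree]
  exact Finset.sum_subset (Finset.subset_univ _) fun i _ hi =>
    Finsupp.notMem_support_iff.mp hi

lemma apol_mem_homogeneous {f F : MvPolynomial (Fin n) k} {d e : ℕ}
    (hf : f.IsHomogeneous d) (hF : F.IsHomogeneous e) :
    (apol f F).IsHomogeneous (e - d) := by
  rw [← mem_homogeneousSubmodule]
  rw [apol_eq_sum_supp]
  apply Submodule.sum_mem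
  intro α hα
  apply Submodule.sum_mem
  intro β hβ
  by_cases hle : α ≤ β
  · rw [mem_homogeneousSubmodule]
    apply isHomogeneous_monomial
    have hα' : α.degree = d := by
      rw [Finsupp.degree_eq_weight_one]; exact hf (MvPolynomial.mem_support_iff.mp hα)
    have hβ' : β.degree = e := by
      rw [Finsupp.degree_eq_weight_one]; exact hF (MvPolynomial.mem_support_iff.mp hβ)
    rw [degree_eq_sum_univ] at *
    rw [show β - α = β - α from rfl]
    have : ∑ i, (β - α) i = (∑ i, β i) - ∑ i, α i := by
      rw [eq_tsub_iff_add_eq_of_le (Finset.sum_le_sum fun i _ => hle i),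
        ← Finset.sum_add_distrib]
      refine Finset.sum_congr rfl fun i _ => ?_
      have := hle i
      rw [Finsupp.tsub_apply]
      omega
      -- (β i - α i) + α i = β i
    rw [this, hα', hβ']
  · rw [dfp_eq_zero hle, Nat.cast_zero, mul_zero, map_zero]
    exact (homogeneousSubmodule _ _ _).zero_mem

lemma apol_eq_zero_of_lt {f F : MvPolynomial (Fin n) k} {d e : ℕ}
    (hf : f.IsHomogeneous d) (hF : F.IsHomogeneous e) (h : e < d) :
    apol f F = 0 := by
  rw [apol_eq_sum_supp]
  apply Finset.sum_eq_zero
  intro α hα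
  apply Finset.sum_eq_zero
  intro β hβ
  have hα' : α.degree = d := by
    rw [Finsupp.degree_eq_weight_one]; exact hf (MvPolynomial.mem_support_iff.mp hα)
  have hβ' : β.degree = e := by
    rw [Finsupp.degree_eq_weight_one]; exact hF (MvPolynomial.mem_support_iff.mp hβ)
  have hle : ¬ α ≤ β := by
    intro hle
    have : α.degree ≤ β.degree := by
      rw [degree_eq_sum_univ, degree_eq_sum_univ]
      exact Finset.sum_le_sum fun i _ => hle i
    omega
  rw [dfp_eq_zero hle, Nat.cast_zero, mul_zero, map_zero]

end ApolAux

namespace ApolAux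
variable {n : ℕ}

def fac (α : Fin n →₀ ℕ) : ℕ := ∏ i, (α i).factorial

lemma dfp_self (α : Fin n →₀ ℕ) : dfp α α = fac α :=
  Finset.prod_congr rfl fun i _ => Nat.descFactorial_self _

lemma constantCoeff_apol_monomial (α : Fin n →₀ ℕ) (F : MvPolynomial (Fin n) k) :
    constantCoeff (apol (monomial α 1) F) = ((fac α : ℕ) : k) * coeff α F := by
  by_cases hα : α ∈ F.support
  · rw [apol_eq_sum (A := {α}) (B := F.support)
      (MvPolynomial.support_monomial_subset) le_rfl, Finset.sum_singleton, map_sum]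
    rw [Finset.sum_eq_single α]
    · rw [coeff_monomial, if_pos rfl, tsub_self, constantCoeff_monomial, if_pos rfl,
        dfp_self, one_mul, mul_comm]
    · intro β _ hβ
      by_cases hle : α ≤ β
      · have : β - α ≠ 0 := by
          intro h0
          apply hβ
          ext i
          have h1 := hle i
          have h2 : β i - α i = 0 := by rw [← Finsupp.tsub_apply β α, h0]; rfl
          omega
        rw [constantCoeff_monomial, if_neg this]
      · rw [dfp_eq_zero hle, Nat.cast_zero, mul_zero, map_zero, map_zero]
    · intro h; exact absurd hα h
  · have h0 : coeff α F = 0 := MvPolynomial.notMem_support_iff.mp hα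
    rw [apol_eq_sum (A := {α}) (B := F.support)
      (MvPolynomial.support_monomial_subset) le_rfl, Finset.sum_singleton, map_sum, h0, mul_zero]
    apply Finset.sum_eq_zero
    intro β hβ
    by_cases hle : α ≤ β
    · have : β - α ≠ 0 := by
        intro hc
        have : β = α := by
          ext i
          have h1 := hle i
          have h2 : β i - α i = 0 := by rw [← Finsupp.tsub_apply β α, hc]; rfl
          omega
        rw [this] at hβ; exact hα hβ
      rw [constantCoeff_monomial, if_neg this]
    · rw [dfp_eq_zero hle, Nat.cast_zero, mul_zero, map_zero, map_zero]

lemma fac_cast_ne_zero [CharZero k] (α : Fin n →₀ ℕ) : ((fac α : ℕ) : k) ≠ 0 := by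
  rw [Nat.cast_ne_zero, fac]
  exact Finset.prod_ne_zero_iff.mpr fun i _ => Nat.factorial_ne_zero _

lemma homog_eq_zero_of_pairing [CharZero k] {H : MvPolynomial (Fin n) k} {e : ℕ}
    (hH : H.IsHomogeneous e)
    (h : ∀ α : Fin n →₀ ℕ, α.degree = e → constantCoeff (apol (monomial α 1) H) = 0) :
    H = 0 := by
  ext β
  rw [coeff_zero]
  by_cases hβ : β.degree = e
  · have := h β hβ
    rw [constantCoeff_apol_monomial] at this
    exact (mul_eq_zero.mp this).resolve_left (fac_cast_ne_zero β)
  · exact hH.coeff_eq_zero hβ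

lemma homogeneousComponent_apol {g F : MvPolynomial (Fin n) k} {d : ℕ}
    (hg : g.IsHomogeneous d) (e : ℕ) :
    homogeneousComponent e (apol g F) = apol g (homogeneousComponent (e + d) F) := by
  conv_lhs => rw [← sum_homogeneousComponent F]
  have : apol g (∑ i ∈ Finset.range (F.totalDegree + 1), homogeneousComponent i F)
      = ∑ i ∈ Finset.range (F.totalDegree + 1), apol g (homogeneousComponent i F) :=
    map_sum (apolLin g) (fun i => homogeneousComponent i F) _
  rw [this, map_sum]
  have key : ∀ j, homogeneousComponent e (apol g (homogeneousComponent j F))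
      = if j = e + d then apol g (homogeneousComponent j F) else 0 := by
    intro j
    by_cases hjd : j < d
    · rw [apol_eq_zero_of_lt hg (homogeneousComponent_isHomogeneous j F) hjd, map_zero]
      simp
    · push_neg at hjd
      have hhom : apol g (homogeneousComponent j F) ∈ homogeneousSubmodule (Fin n) k (j - d) :=
        (mem_homogeneousSubmodule _ _).mpr
          (apol_mem_homogeneous hg (homogeneousComponent_isHomogeneous j F))
      rw [homogeneousComponent_of_mem hhom]
      by_cases hj : j = e + d
      · rw [if_pos hj, if_pos (by omega)]
      · rw [if_neg hj, if_neg (by omega)]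
  rw [Finset.sum_congr rfl fun j _ => key j]
  rw [Finset.sum_ite_eq' (Finset.range (F.totalDegree + 1)) (e + d)
    (fun j => apol g (homogeneousComponent j F))]
  by_cases hmem : e + d ∈ Finset.range (F.totalDegree + 1)
  · rw [if_pos hmem]
  · rw [if_neg hmem]
    rw [homogeneousComponent_eq_zero _ _ (by simp at hmem; omega), apol_zero_right]

end ApolAux

namespace ApolAux
variable {n : ℕ}

lemma eval_smul_homog {H : MvPolynomial (Fin n) k} {d : ℕ} (hH : H.IsHomogeneous d)
    (t : k) (x : Fin n → k) : eval (t • x) H = t ^ d * eval x H := by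
  conv_lhs => rw [MvPolynomial.as_sum H]
  conv_rhs => rw [MvPolynomial.as_sum H]
  rw [map_sum, map_sum, Finset.mul_sum]
  refine Finset.sum_congr rfl fun β hβ => ?_
  rw [eval_monomial, eval_monomial]
  have hd : ∑ i, β i = d := by
    rw [← degree_eq_sum_univ, Finsupp.degree_eq_weight_one]
    exact hH (MvPolynomial.mem_support_iff.mp hβ)
  have : (β.prod fun i e => ((t • x) i) ^ e) = t ^ d * β.prod fun i e => (x i) ^ e := by
    rw [Finsupp.prod, Finsupp.prod]
    have : ∀ i ∈ β.support, ((t • x) i) ^ (β i) = t ^ (β i) * (x i) ^ (β i) := by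
      intro i _
      rw [Pi.smul_apply, smul_eq_mul, mul_pow]
    rw [Finset.prod_congr rfl this, Finset.prod_mul_distrib, Finset.prod_pow_eq_pow_sum]
    have hsum : ∑ i ∈ β.support, β i = d := by
      rw [← hd]
      exact Finset.sum_subset (Finset.subset_univ _) fun i _ hi =>
        Finsupp.notMem_support_iff.mp hi
    rw [hsum]
  rw [this]
  ring

lemma mem_projIdeal_iff {r : ℕ} {a : Fin r → Fin n → k} [CharZero k]
    {f : MvPolynomial (Fin n) k} :
    f ∈ projIdeal a ↔ ∀ i, ∀ d, eval (a i) (homogeneousComponent d f) = 0 := by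
  constructor
  · intro hf i d
    have h : ∀ t : k, eval (t • a i) f = 0 := by
      intro t
      have hh := hf
      unfold projIdeal at hh
      rw [Ideal.mem_iInf] at hh
      have := hh i
      rw [Ideal.mem_iInf] at this
      exact RingHom.mem_ker.mp (this t)
    -- expand via components
    have hexp : ∀ t : k, ∑ e ∈ Finset.range (f.totalDegree + 1),
        t ^ e * eval (a i) (homogeneousComponent e f) = 0 := by
      intro t
      have := h t
      conv_lhs at this => rw [← sum_homogeneousComponent f]
      rw [map_sum] at this
      rw [← this]
      exact Finset.sum_congr rfl fun e _ =>
        (eval_smul_homog (homogeneousComponent_isHomogeneous e f) t (a i)).symm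
    -- build a univariate polynomial
    set p : Polynomial k := ∑ e ∈ Finset.range (f.totalDegree + 1),
      Polynomial.C (eval (a i) (homogeneousComponent e f)) * Polynomial.X ^ e with hp
    have hpz : p = 0 := by
      apply Polynomial.zero_of_eval_zero
      intro t
      rw [hp]
      rw [Polynomial.eval_finset_sum]
      rw [← hexp t]
      refine Finset.sum_congr rfl fun e _ => ?_
      rw [Polynomial.eval_mul, Polynomial.eval_C, Polynomial.eval_pow, Polynomial.eval_X,
        mul_comm]
    by_cases hd : d ≤ f.totalDegree
    · have := congrArg (Polynomial.coeff · d) hpz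
      simp only [hp, Polynomial.finset_sum_coeff, Polynomial.coeff_C_mul,
        Polynomial.coeff_X_pow, Polynomial.coeff_zero] at this
      rw [Finset.sum_eq_single d] at this
      · rw [if_pos rfl, mul_one] at this
        exact this
      · intro e _ he
        rw [if_neg (fun hde => he hde.symm), mul_zero]
      · intro hmem
        simp only [Finset.mem_range, not_lt] at hmem
        omega
    · push_neg at hd
      rw [homogeneousComponent_eq_zero _ _ hd, map_zero]
  · intro h
    unfold projIdeal
    rw [Ideal.mem_iInf]
    intro i
    rw [Ideal.mem_iInf]
    intro t
    rw [RingHom.mem_ker]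
    conv_lhs => rw [← sum_homogeneousComponent f]
    rw [map_sum]
    apply Finset.sum_eq_zero
    intro e _
    rw [eval_smul_homog (homogeneousComponent_isHomogeneous e f) t (a i), h i e, mul_zero]

lemma homog_mem_projIdeal_iff {r : ℕ} {a : Fin r → Fin n → k} [CharZero k]
    {f : MvPolynomial (Fin n) k} {d : ℕ} (hf : f.IsHomogeneous d) :
    f ∈ projIdeal a ↔ ∀ i, eval (a i) f = 0 := by
  rw [mem_projIdeal_iff]
  constructor
  · intro h i
    have := h i d
    rwa [homogeneousComponent_of_mem ((mem_homogeneousSubmodule _ _).mpr hf), if_pos rfl]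
      at this
  · intro h i e
    rw [homogeneousComponent_of_mem ((mem_homogeneousSubmodule _ _).mpr hf)]
    by_cases he : e = d
    · rw [if_pos he]; exact h i
    · rw [if_neg he, map_zero]

end ApolAux

namespace ApolAux

variable {m : ℕ}

instance gammaFD (j : ℕ) : FiniteDimensional k (homogeneousSubmodule (Fin m) k j) :=
  Submodule.finiteDimensional_of_le (S₂ := restrictTotalDegree (Fin m) k j)
    (fun p hp => (mem_restrictTotalDegree _ _ _).mpr
      ((mem_homogeneousSubmodule _ _).mp hp).totalDegree_le)

lemma eval_dualLin (b : Fin m → k) (x : Fin m → k) :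
    eval x (dualLin b) = ∑ j, b j * x j := by
  rw [dualLin, map_sum]
  exact Finset.sum_congr rfl fun j _ => by rw [map_mul, eval_C, eval_X]

lemma dualLin_isHomogeneous (b : Fin m → k) : (dualLin b).IsHomogeneous 1 := by
  rw [← mem_homogeneousSubmodule, dualLin]
  apply Submodule.sum_mem
  intro j _
  rw [mem_homogeneousSubmodule]
  exact (isHomogeneous_C _ _).mul (isHomogeneous_X _ _)

lemma constantCoeff_dualLin (b : Fin m → k) : constantCoeff (dualLin b) = 0 := by
  rw [dualLin, map_sum]
  apply Finset.sum_eq_zero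
  intro j _
  rw [map_mul, constantCoeff_X, mul_zero]

lemma dualLin_ne_zero {b : Fin m → k} {x : Fin m → k} (h : ∑ j, b j * x j ≠ 0) :
    dualLin b ≠ 0 := fun h0 => h (by rw [← eval_dualLin b x, h0, map_zero])

/-- component of a product with a homogeneous degree-1 form. -/
lemma homogeneousComponent_mul_linear {z q : MvPolynomial (Fin m) k}
    (hzh : z.IsHomogeneous 1) (j : ℕ) :
    homogeneousComponent (j + 1) (q * z) = homogeneousComponent j q * z := by
  conv_lhs => rw [← sum_homogeneousComponent q, Finset.sum_mul, map_sum]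
  have key : ∀ e, homogeneousComponent (j + 1) (homogeneousComponent e q * z)
      = if e = j then homogeneousComponent e q * z else 0 := by
    intro e
    have hmem : homogeneousComponent e q * z ∈ homogeneousSubmodule (Fin m) k (e + 1) :=
      (mem_homogeneousSubmodule _ _).mpr
        ((homogeneousComponent_isHomogeneous e q).mul hzh)
    rw [homogeneousComponent_of_mem hmem]
    by_cases he : e = j
    · rw [if_pos (by omega), if_pos he]
    · rw [if_neg (by omega), if_neg he]
  rw [Finset.sum_congr rfl fun e _ => key e, Finset.sum_ite_eq' _ j
    (fun e => homogeneousComponent e q * z)]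
  by_cases hmem : j ∈ Finset.range (q.totalDegree + 1)
  · rw [if_pos hmem]
  · rw [if_neg hmem, homogeneousComponent_eq_zero _ _ (by simp at hmem; omega), zero_mul]

lemma homogeneousComponent_zero_mul_linear {z q : MvPolynomial (Fin m) k}
    (hz0 : constantCoeff z = 0) :
    homogeneousComponent 0 (q * z) = 0 := by
  rw [homogeneousComponent_zero]
  have : coeff 0 (q * z) = constantCoeff (q * z) := rfl
  rw [this, map_mul, hz0, mul_zero, map_zero]

end ApolAux

namespace ApolAux

section Main

variable {m r : ℕ} [CharZero k] (a : Fin r → Fin m → k) (b : Fin m → k)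

def I'idl : Ideal (MvPolynomial (Fin m) k) := projIdeal a ⊔ Ideal.span {dualLin b}

def Ij (j : ℕ) : Submodule k (MvPolynomial (Fin m) k) :=
  Submodule.restrictScalars k (projIdeal a) ⊓ homogeneousSubmodule (Fin m) k j

def I'j (j : ℕ) : Submodule k (MvPolynomial (Fin m) k) :=
  Submodule.restrictScalars k (I'idl a b) ⊓ homogeneousSubmodule (Fin m) k j

def Psub : Submodule k (MvPolynomial (Fin m) k) :=
  ⨅ g : (I'idl a b : Set (MvPolynomial (Fin m) k)), LinearMap.ker (apolLin (g : MvPolynomial (Fin m) k))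

lemma mem_Psub {F : MvPolynomial (Fin m) k} :
    F ∈ Psub a b ↔ ∀ g ∈ I'idl a b, apol g F = 0 := by
  rw [Psub, Submodule.mem_iInf]
  constructor
  · intro h g hg; exact h ⟨g, hg⟩
  · intro h g; exact h g.1 g.2

lemma mem_I'idl {g : MvPolynomial (Fin m) k} :
    g ∈ I'idl a b ↔ ∃ p ∈ projIdeal a, ∃ q, g = p + q * dualLin b := by
  rw [I'idl, Submodule.mem_sup]
  constructor
  · rintro ⟨p, hp, w, hw, rfl⟩
    obtain ⟨q, hq⟩ := Ideal.mem_span_singleton'.mp hw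
    exact ⟨p, hp, q, by rw [hq]⟩
  · rintro ⟨p, hp, q, rfl⟩
    exact ⟨p, hp, q * dualLin b, Ideal.mem_span_singleton'.mpr ⟨q, rfl⟩, rfl⟩

lemma component_mem_projIdeal {f : MvPolynomial (Fin m) k} (hf : f ∈ projIdeal a) (d : ℕ) :
    homogeneousComponent d f ∈ projIdeal a := by
  rw [mem_projIdeal_iff] at hf ⊢
  intro i e
  rw [homogeneousComponent_of_mem (homogeneousComponent_mem d f)]
  by_cases he : e = d
  · rw [if_pos he]; exact hf i d
  · rw [if_neg he, map_zero]

lemma component_mem_I'idl {g : MvPolynomial (Fin m) k} (hg : g ∈ I'idl a b) (d : ℕ) :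
    homogeneousComponent d g ∈ I'idl a b := by
  obtain ⟨p, hp, q, rfl⟩ := (mem_I'idl a b).mp hg
  rw [map_add]
  apply Ideal.add_mem
  · exact Ideal.mem_sup_left (component_mem_projIdeal a hp d)
  · apply Ideal.mem_sup_right
    rcases d with _ | d'
    · rw [homogeneousComponent_zero_mul_linear (constantCoeff_dualLin b)]
      exact Ideal.zero_mem _
    · rw [homogeneousComponent_mul_linear (dualLin_isHomogeneous b)]
      exact Ideal.mul_mem_left _ _ (Ideal.subset_span rfl)

lemma component_mem_Psub {F : MvPolynomial (Fin m) k} (hF : F ∈ Psub a b) (j : ℕ) :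
    homogeneousComponent j F ∈ Psub a b := by
  rw [mem_Psub] at hF ⊢
  intro g hg
  have hsplit : apol g (homogeneousComponent j F)
      = ∑ d ∈ Finset.range (g.totalDegree + 1),
          apol (homogeneousComponent d g) (homogeneousComponent j F) := by
    conv_lhs => rw [← sum_homogeneousComponent g]
    exact map_sum (apolLin.flip (homogeneousComponent j F)) (fun d => homogeneousComponent d g) _
  rw [hsplit]
  apply Finset.sum_eq_zero
  intro d _
  by_cases hdj : d ≤ j
  · have : homogeneousComponent j F
        = homogeneousComponent ((j - d) + d) F := by rw [Nat.sub_add_cancel hdj]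
    rw [this, ← homogeneousComponent_apol (homogeneousComponent_isHomogeneous d g) (j - d),
      hF _ (component_mem_I'idl a b hg d), map_zero]
  · exact apol_eq_zero_of_lt (homogeneousComponent_isHomogeneous d g)
      (homogeneousComponent_isHomogeneous j F) (by omega)

end Main
end ApolAux

namespace ApolAux
section Main2

variable {m r : ℕ} [CharZero k] (a : Fin r → Fin m → k) (b : Fin m → k)

/-- multiplication by `dualLin b` as a linear map -/
def mulz : MvPolynomial (Fin m) k →ₗ[k] MvPolynomial (Fin m) k :=
  LinearMap.mulRight k (dualLin b)

lemma mulz_apply (q : MvPolynomial (Fin m) k) : mulz b q = q * dualLin b := rfl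

lemma I'j_zero_eq : I'j a b 0 = Ij a 0 := by
  apply le_antisymm
  · intro f hf
    obtain ⟨hf1, hf2⟩ := Submodule.mem_inf.mp hf
    obtain ⟨p, hp, q, rfl⟩ := (mem_I'idl a b).mp hf1
    refine Submodule.mem_inf.mpr ⟨?_, hf2⟩
    have := homogeneousComponent_of_mem (m := 0) hf2
    rw [if_pos rfl] at this
    have hres : homogeneousComponent 0 (p + q * dualLin b) ∈ projIdeal a := by
      rw [map_add, homogeneousComponent_zero_mul_linear (constantCoeff_dualLin b), add_zero]
      exact component_mem_projIdeal a hp 0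
    rw [this] at hres
    exact hres
  · intro f hf
    obtain ⟨hf1, hf2⟩ := Submodule.mem_inf.mp hf
    exact Submodule.mem_inf.mpr ⟨Ideal.mem_sup_left hf1, hf2⟩

lemma I'j_succ_eq (j : ℕ) :
    I'j a b (j + 1) = Ij a (j + 1) ⊔ Submodule.map (mulz b) (homogeneousSubmodule (Fin m) k j) := by
  apply le_antisymm
  · intro f hf
    obtain ⟨hf1, hf2⟩ := Submodule.mem_inf.mp hf
    obtain ⟨p, hp, q, rfl⟩ := (mem_I'idl a b).mp hf1
    have hcomp := homogeneousComponent_of_mem (m := j + 1) hf2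
    rw [if_pos rfl] at hcomp
    rw [Submodule.mem_sup]
    refine ⟨homogeneousComponent (j+1) p, ⟨component_mem_projIdeal a hp (j+1),
      homogeneousComponent_mem _ _⟩,
      homogeneousComponent j q * dualLin b,
      ⟨homogeneousComponent j q, homogeneousComponent_mem _ _, rfl⟩, ?_⟩
    rw [← homogeneousComponent_mul_linear (dualLin_isHomogeneous b), ← map_add, hcomp]
  · apply sup_le
    · intro f hf
      obtain ⟨hf1, hf2⟩ := Submodule.mem_inf.mp hf
      exact Submodule.mem_inf.mpr ⟨Ideal.mem_sup_left hf1, hf2⟩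
    · rintro f ⟨q, hq, rfl⟩
      refine Submodule.mem_inf.mpr ⟨?_, ?_⟩
      · exact Ideal.mem_sup_right (Ideal.mul_mem_left _ _ (Ideal.subset_span rfl))
      · exact (mem_homogeneousSubmodule _ _).mpr
          (((mem_homogeneousSubmodule _ _).mp hq).mul (dualLin_isHomogeneous b))

lemma nzd_graded (hz : ∀ i, (∑ j, b j * a i j) ≠ 0) {q : MvPolynomial (Fin m) k} {e : ℕ}
    (hq : q.IsHomogeneous e) (h : q * dualLin b ∈ projIdeal a) : q ∈ projIdeal a := by
  rw [homog_mem_projIdeal_iff (hq.mul (dualLin_isHomogeneous b))] at h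
  rw [homog_mem_projIdeal_iff hq]
  intro i
  have := h i
  rw [map_mul, eval_dualLin] at this
  exact (mul_eq_zero.mp this).resolve_right (hz i)

lemma inf_eq (hz : ∀ i, (∑ j, b j * a i j) ≠ 0) (j : ℕ) :
    Ij a (j + 1) ⊓ Submodule.map (mulz b) (homogeneousSubmodule (Fin m) k j)
      = Submodule.map (mulz b) (Ij a j) := by
  apply le_antisymm
  · intro f hf
    obtain ⟨hfI2, q, hq, hfeq⟩ := Submodule.mem_inf.mp hf
    have hmul : q * dualLin b ∈ projIdeal a := by
      have h1 := (Submodule.mem_inf.mp hfI2).1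
      rw [← hfeq, mulz_apply] at h1
      exact h1
    refine ⟨q, Submodule.mem_inf.mpr
      ⟨nzd_graded a b hz ((mem_homogeneousSubmodule _ _).mp hq) hmul, hq⟩, hfeq⟩
  · rintro f ⟨q, hq, rfl⟩
    obtain ⟨hq1, hq2⟩ := Submodule.mem_inf.mp hq
    refine Submodule.mem_inf.mpr ⟨Submodule.mem_inf.mpr ⟨?_, ?_⟩, ⟨q, hq2, rfl⟩⟩
    · show mulz b q ∈ projIdeal a
      rw [mulz_apply]
      exact Ideal.mul_mem_right _ _ hq1
    · show mulz b q ∈ homogeneousSubmodule (Fin m) k (j + 1)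
      rw [mulz_apply]
      exact (mem_homogeneousSubmodule _ _).mpr
        (((mem_homogeneousSubmodule _ _).mp hq2).mul (dualLin_isHomogeneous b))

lemma mulz_injective (hz0 : dualLin b ≠ (0 : MvPolynomial (Fin m) k)) :
    Function.Injective (mulz b (k := k) (m := m)) := by
  intro x y hxy
  rw [mulz_apply, mulz_apply] at hxy
  exact mul_right_cancel₀ hz0 hxy

lemma finrank_I'j_succ (hz : ∀ i, (∑ j, b j * a i j) ≠ 0)
    (hz0 : dualLin b ≠ (0 : MvPolynomial (Fin m) k)) (j : ℕ) :
    Module.finrank k (I'j a b (j+1)) + Module.finrank k (Ij a j)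
      = Module.finrank k (Ij a (j+1)) + Module.finrank k (homogeneousSubmodule (Fin m) k j) := by
  have fd1 : FiniteDimensional k (Ij a (j+1)) :=
    Submodule.finiteDimensional_of_le (inf_le_right)
  have fd2 : FiniteDimensional k (Submodule.map (mulz b) (homogeneousSubmodule (Fin m) k j)) := by
    apply Submodule.finiteDimensional_of_le
      (S₂ := homogeneousSubmodule (Fin m) k (j+1))
    rintro f ⟨q, hq, rfl⟩
    rw [mulz_apply, mem_homogeneousSubmodule]
    exact ((mem_homogeneousSubmodule _ _).mp hq).mul (dualLin_isHomogeneous b)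
  have key := Submodule.finrank_sup_add_finrank_inf_eq (Ij a (j+1))
    (Submodule.map (mulz b) (homogeneousSubmodule (Fin m) k j))
  rw [inf_eq a b hz j] at key
  rw [← I'j_succ_eq a b j] at key
  have e1 : Module.finrank k (Submodule.map (mulz b) (homogeneousSubmodule (Fin m) k j))
      = Module.finrank k (homogeneousSubmodule (Fin m) k j) :=
    (LinearEquiv.finrank_eq (Submodule.equivMapOfInjective _ (mulz_injective b hz0) _)).symm
  have e2 : Module.finrank k (Submodule.map (mulz b) (Ij a j))
      = Module.finrank k (Ij a j) :=
    (LinearEquiv.finrank_eq (Submodule.equivMapOfInjective _ (mulz_injective b hz0) _)).symm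
  omega

end Main2
end ApolAux

namespace ApolAux
section Main3

variable {m r : ℕ} [CharZero k] (a : Fin r → Fin m → k) (b : Fin m → k)

def Bf : MvPolynomial (Fin m) k →ₗ[k] MvPolynomial (Fin m) k →ₗ[k] k :=
  apolLin.compr₂ (lcoeff k 0)

lemma Bf_apply (g F : MvPolynomial (Fin m) k) : Bf g F = coeff 0 (apol g F) := rfl

def Pj (j : ℕ) : Submodule k (MvPolynomial (Fin m) k) :=
  Psub a b ⊓ homogeneousSubmodule (Fin m) k j

def Smap (j : ℕ) : (homogeneousSubmodule (Fin m) k j) →ₗ[k]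
    Module.Dual k (homogeneousSubmodule (Fin m) k j) :=
  ((Bf (k := k) (m := m)).flip.compl₂ (homogeneousSubmodule (Fin m) k j).subtype) ∘ₗ
    (homogeneousSubmodule (Fin m) k j).subtype

lemma Smap_apply (j : ℕ) (F g : homogeneousSubmodule (Fin m) k j) :
    Smap j F g = coeff 0 (apol (g : MvPolynomial (Fin m) k) (F : MvPolynomial (Fin m) k)) := rfl

lemma Smap_injective (j : ℕ) : Function.Injective (Smap (k := k) (m := m) j) := by
  rw [← LinearMap.ker_eq_bot]
  rw [Submodule.eq_bot_iff]
  intro F hF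
  rw [LinearMap.mem_ker] at hF
  apply Subtype.ext
  show (F : MvPolynomial (Fin m) k) = 0
  apply homog_eq_zero_of_pairing ((mem_homogeneousSubmodule _ _).mp F.2)
  intro α hα
  have hmono : monomial α (1:k) ∈ homogeneousSubmodule (Fin m) k j :=
    (mem_homogeneousSubmodule _ _).mpr (isHomogeneous_monomial _ hα)
  have := congrArg (fun φ => φ ⟨monomial α 1, hmono⟩) hF
  exact this

lemma Smap_surjective (j : ℕ) : Function.Surjective (Smap (k := k) (m := m) j) := by
  have h := LinearMap.injective_iff_surjective_of_finrank_eq_finrank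
    (f := Smap (k := k) (m := m) j) (Subspace.dual_finrank_eq (K := k)).symm
  exact h.mp (Smap_injective j)

def Phimap (j : ℕ) : (homogeneousSubmodule (Fin m) k j) →ₗ[k] Module.Dual k (I'j a b j) :=
  (Submodule.inclusion (inf_le_right : I'j a b j ≤ homogeneousSubmodule (Fin m) k j)).dualMap
    ∘ₗ Smap j

lemma Phimap_surjective (j : ℕ) : Function.Surjective (Phimap a b j) :=
  (LinearMap.dualMap_surjective_of_injective
    (Submodule.inclusion_injective _)).comp (Smap_surjective j)

lemma Phimap_apply (j : ℕ) (F : homogeneousSubmodule (Fin m) k j) (g : I'j a b j) :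
    Phimap a b j F g
      = coeff 0 (apol (g : MvPolynomial (Fin m) k) (F : MvPolynomial (Fin m) k)) := rfl

lemma ker_Phimap (j : ℕ) :
    LinearMap.ker (Phimap a b j)
      = Submodule.comap (homogeneousSubmodule (Fin m) k j).subtype (Psub a b) := by
  ext F
  rw [LinearMap.mem_ker, Submodule.mem_comap]
  constructor
  · intro hF
    show (F : MvPolynomial (Fin m) k) ∈ Psub a b
    rw [mem_Psub]
    intro g hg
    have hsplit : apol g (F : MvPolynomial (Fin m) k)
        = ∑ d ∈ Finset.range (g.totalDegree + 1),
            apol (homogeneousComponent d g) (F : MvPolynomial (Fin m) k) := by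
      conv_lhs => rw [← sum_homogeneousComponent g]
      exact map_sum (apolLin.flip (F : MvPolynomial (Fin m) k)) (fun d => homogeneousComponent d g) _
    rw [hsplit]
    apply Finset.sum_eq_zero
    intro d _
    have hgd : (homogeneousComponent d g).IsHomogeneous d :=
      homogeneousComponent_isHomogeneous d g
    have hgdI : homogeneousComponent d g ∈ I'idl a b := component_mem_I'idl a b hg d
    by_cases hdj : d ≤ j
    · have hhom : (apol (homogeneousComponent d g) (F : MvPolynomial (Fin m) k)).IsHomogeneous
          (j - d) := apol_mem_homogeneous hgd ((mem_homogeneousSubmodule _ _).mp F.2)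
      apply homog_eq_zero_of_pairing hhom
      intro α hα
      have hmul : (monomial α (1:k)) * homogeneousComponent d g ∈ I'j a b j := by
        refine Submodule.mem_inf.mpr ⟨Ideal.mul_mem_left _ _ hgdI, ?_⟩
        refine (mem_homogeneousSubmodule _ _).mpr ?_
        have := (isHomogeneous_monomial (1:k) hα).mul hgd
        rwa [Nat.sub_add_cancel hdj] at this
      have hze := congrArg (fun φ => φ ⟨_, hmul⟩) hF
      simp only [Phimap_apply] at hze
      show constantCoeff (apol (monomial α 1)
        (apol (homogeneousComponent d g) (F : MvPolynomial (Fin m) k))) = 0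
      rw [← apol_mul]
      exact hze
    · exact apol_eq_zero_of_lt hgd ((mem_homogeneousSubmodule _ _).mp F.2) (by omega)
  · intro hF
    apply LinearMap.ext
    intro g
    rw [Phimap_apply]
    have : apol (g : MvPolynomial (Fin m) k) (F : MvPolynomial (Fin m) k) = 0 :=
      (mem_Psub a b).mp hF _ ((Submodule.mem_inf.mp g.2).1)
    rw [this, coeff_zero]
    rfl

lemma finrank_Pj_add_I'j (j : ℕ) :
    Module.finrank k (Pj a b j) + Module.finrank k (I'j a b j)
      = Module.finrank k (homogeneousSubmodule (Fin m) k j) := by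
  have fdI' : FiniteDimensional k (I'j a b j) :=
    Submodule.finiteDimensional_of_le inf_le_right
  have h1 := LinearMap.finrank_range_add_finrank_ker (Phimap a b j)
  have h2 : LinearMap.range (Phimap a b j) = ⊤ :=
    LinearMap.range_eq_top.mpr (Phimap_surjective a b j)
  rw [h2, finrank_top] at h1
  have h3 : Module.finrank k (Module.Dual k (I'j a b j)) = Module.finrank k (I'j a b j) :=
    Subspace.dual_finrank_eq
  have h4 : Module.finrank k (LinearMap.ker (Phimap a b j)) = Module.finrank k (Pj a b j) := by
    rw [ker_Phimap]
    have hcomapeq : Submodule.comap (homogeneousSubmodule (Fin m) k j).subtype (Psub a b)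
        = Submodule.comap (homogeneousSubmodule (Fin m) k j).subtype (Pj a b j) := by
      ext F
      rw [Submodule.mem_comap, Submodule.mem_comap, Pj, Submodule.mem_inf]
      exact ⟨fun h => ⟨h, F.2⟩, fun h => h.1⟩
    rw [hcomapeq]
    exact LinearEquiv.finrank_eq
      (Submodule.comapSubtypeEquivOfLe (inf_le_right : Pj a b j ≤ homogeneousSubmodule (Fin m) k j))
  omega

end Main3
end ApolAux

namespace ApolAux
section Main4

variable {m r : ℕ} [CharZero k] (a : Fin r → Fin m → k) (b : Fin m → k)

lemma HF_eq (j : ℕ) : HF (projIdeal a) j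
    = Module.finrank k (homogeneousSubmodule (Fin m) k j) - Module.finrank k (Ij a j) := rfl

lemma finrank_Ij_le (j : ℕ) :
    Module.finrank k (Ij a j) ≤ Module.finrank k (homogeneousSubmodule (Fin m) k j) :=
  Submodule.finrank_mono inf_le_right

lemma finrank_Pj_zero : Module.finrank k (Pj a b 0) = HF (projIdeal a) 0 := by
  have h1 := finrank_Pj_add_I'j a b 0
  rw [I'j_zero_eq a b] at h1
  have h2 := finrank_Ij_le a (m := m) 0
  rw [HF_eq]
  omega

lemma finrank_Pj_succ (hz : ∀ i, (∑ j, b j * a i j) ≠ 0)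
    (hz0 : dualLin b ≠ (0 : MvPolynomial (Fin m) k)) (j : ℕ) :
    Module.finrank k (Pj a b (j+1)) + HF (projIdeal a) j = HF (projIdeal a) (j+1) := by
  have h1 := finrank_Pj_add_I'j a b (j+1)
  have h2 := finrank_I'j_succ a b hz hz0 j
  have h3 := finrank_Ij_le a (m := m) j
  have h4 := finrank_Ij_le a (m := m) (j+1)
  rw [HF_eq, HF_eq]
  omega

lemma telescope (hz : ∀ i, (∑ j, b j * a i j) ≠ 0)
    (hz0 : dualLin b ≠ (0 : MvPolynomial (Fin m) k)) (N : ℕ) :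
    ∑ j ∈ Finset.range (N + 1), Module.finrank k (Pj a b j) = HF (projIdeal a) N := by
  induction N with
  | zero => rw [Finset.sum_range_one, finrank_Pj_zero]
  | succ N ih =>
    rw [Finset.sum_range_succ, ih, ← finrank_Pj_succ a b hz hz0 N]
    omega

lemma Pj_eq_bot {s : ℕ} (hz : ∀ i, (∑ j, b j * a i j) ≠ 0)
    (hz0 : dualLin b ≠ (0 : MvPolynomial (Fin m) k))
    (hsr : ∀ t, s ≤ t → HF (projIdeal a) t = r) {j : ℕ} (hj : s < j) :
    Pj a b j = ⊥ := by
  obtain ⟨t, rfl⟩ : ∃ t, j = t + 1 := ⟨j - 1, by omega⟩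
  have h1 := finrank_Pj_succ a b hz hz0 t
  rw [hsr t (by omega), hsr (t+1) (by omega)] at h1
  have fd : FiniteDimensional k (Pj a b (t+1)) :=
    Submodule.finiteDimensional_of_le (inf_le_right : Pj a b (t+1) ≤ _)
  exact Submodule.finrank_eq_zero.mp (by omega)

lemma sum_homogeneousComponent_ge {φ : MvPolynomial (Fin m) k} {N : ℕ}
    (h : φ.totalDegree ≤ N) :
    ∑ j ∈ Finset.range (N + 1), homogeneousComponent j φ = φ := by
  conv_rhs => rw [← sum_homogeneousComponent φ]
  exact (Finset.sum_subset (Finset.range_subset_range.mpr (by omega))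
    fun j _ hj => homogeneousComponent_eq_zero _ _ (by simp at hj ⊢; omega)).symm

variable (s : ℕ)

def Cmap (j : ℕ) : (Psub a b : Submodule k (MvPolynomial (Fin m) k)) →ₗ[k] Pj a b j :=
  LinearMap.codRestrict (Pj a b j)
    ((homogeneousComponent j : MvPolynomial (Fin m) k →ₗ[k] MvPolynomial (Fin m) k)
      ∘ₗ (Psub a b).subtype)
    (fun F => Submodule.mem_inf.mpr
      ⟨component_mem_Psub a b F.2 j, homogeneousComponent_mem j F.1⟩)

def toPi : (Psub a b : Submodule k (MvPolynomial (Fin m) k)) →ₗ[k]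
    ((j : Fin (s+1)) → Pj a b j) :=
  LinearMap.pi (fun j => Cmap a b (j : ℕ))

def ofPi : ((j : Fin (s+1)) → Pj a b j) →ₗ[k]
    (Psub a b : Submodule k (MvPolynomial (Fin m) k)) :=
  LinearMap.codRestrict (Psub a b)
    (∑ j : Fin (s+1), (Pj a b (j : ℕ)).subtype ∘ₗ LinearMap.proj j)
    (fun G => by
      rw [LinearMap.sum_apply]
      apply Submodule.sum_mem
      intro j _
      exact (Submodule.mem_inf.mp (G j).2).1)

lemma toPi_ofPi (G : (j : Fin (s+1)) → Pj a b (j : ℕ)) : toPi a b s (ofPi a b s G) = G := by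
  funext j
  apply Subtype.ext
  show homogeneousComponent (j : ℕ)
    ((∑ j' : Fin (s+1), (Pj a b (j' : ℕ)).subtype ∘ₗ LinearMap.proj j') G) = (G j : _)
  rw [LinearMap.sum_apply, map_sum]
  have key : ∀ j' : Fin (s+1), homogeneousComponent (j : ℕ)
      (((Pj a b (j' : ℕ)).subtype ∘ₗ LinearMap.proj j') G)
      = if j' = j then (G j' : MvPolynomial (Fin m) k) else 0 := by
    intro j'
    have hmem : (G j' : MvPolynomial (Fin m) k) ∈ homogeneousSubmodule (Fin m) k (j' : ℕ) :=
      (Submodule.mem_inf.mp (G j').2).2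
    show homogeneousComponent (j : ℕ) (G j' : MvPolynomial (Fin m) k) = _
    rw [homogeneousComponent_of_mem hmem]
    by_cases h : j' = j
    · rw [if_pos (by rw [h]), if_pos h]
    · rw [if_neg (by intro hc; exact h (Fin.ext hc).symm), if_neg h]
  rw [Finset.sum_congr rfl fun j' _ => key j']
  rw [Finset.sum_ite_eq' Finset.univ j (fun j' => (G j' : MvPolynomial (Fin m) k))]
  rw [if_pos (Finset.mem_univ j)]

lemma ofPi_toPi (hz : ∀ i, (∑ j, b j * a i j) ≠ 0)
    (hz0 : dualLin b ≠ (0 : MvPolynomial (Fin m) k))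
    (hsr : ∀ t, s ≤ t → HF (projIdeal a) t = r)
    (F : (Psub a b : Submodule k (MvPolynomial (Fin m) k))) :
    ofPi a b s (toPi a b s F) = F := by
  apply Subtype.ext
  show (∑ j : Fin (s+1), (Pj a b (j : ℕ)).subtype ∘ₗ LinearMap.proj j) (toPi a b s F)
    = (F : MvPolynomial (Fin m) k)
  rw [LinearMap.sum_apply]
  have step1 : ∀ j : Fin (s+1),
      (((Pj a b (j : ℕ)).subtype ∘ₗ LinearMap.proj j) (toPi a b s F))
      = homogeneousComponent (j : ℕ) (F : MvPolynomial (Fin m) k) := fun j => rfl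
  rw [Finset.sum_congr rfl fun j _ => step1 j]
  rw [Fin.sum_univ_eq_sum_range (fun j => homogeneousComponent j (F : MvPolynomial (Fin m) k))]
  set N := max ((F : MvPolynomial (Fin m) k).totalDegree) s with hN
  have hbig : ∑ j ∈ Finset.range (N + 1), homogeneousComponent j (F : MvPolynomial (Fin m) k)
      = (F : MvPolynomial (Fin m) k) :=
    sum_homogeneousComponent_ge (le_max_left _ _)
  refine (Finset.sum_subset (Finset.range_subset_range.mpr (by omega)) ?_).trans hbig
  intro j hj1 hj2
  simp only [Finset.mem_range] at hj1 hj2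
  have hjs : s < j := by omega
  have hmem : homogeneousComponent j (F : MvPolynomial (Fin m) k) ∈ Pj a b j :=
    Submodule.mem_inf.mpr ⟨component_mem_Psub a b F.2 j, homogeneousComponent_mem j _⟩
  rw [Pj_eq_bot a b hz hz0 hsr hjs] at hmem
  exact hmem

def psubEquiv (hz : ∀ i, (∑ j, b j * a i j) ≠ 0)
    (hz0 : dualLin b ≠ (0 : MvPolynomial (Fin m) k))
    (hsr : ∀ t, s ≤ t → HF (projIdeal a) t = r) :
    (Psub a b : Submodule k (MvPolynomial (Fin m) k)) ≃ₗ[k] ((j : Fin (s+1)) → Pj a b (j : ℕ)) :=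
  LinearEquiv.ofLinear (toPi a b s) (ofPi a b s)
    (LinearMap.ext fun G => toPi_ofPi a b s G)
    (LinearMap.ext fun F => ofPi_toPi a b s (r := r) hz hz0 hsr F)

lemma finrank_Psub (hz : ∀ i, (∑ j, b j * a i j) ≠ 0)
    (hz0 : dualLin b ≠ (0 : MvPolynomial (Fin m) k))
    (hsr : ∀ t, s ≤ t → HF (projIdeal a) t = r) :
    Module.finrank k (Psub a b : Submodule k (MvPolynomial (Fin m) k)) = r := by
  have fdj : ∀ j : ℕ, FiniteDimensional k (Pj a b j) := fun j =>
    Submodule.finiteDimensional_of_le inf_le_right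
  have h1 := LinearEquiv.finrank_eq (psubEquiv a b s hz hz0 hsr)
  rw [h1, Module.finrank_pi_fintype]
  rw [Fin.sum_univ_eq_sum_range (fun j => Module.finrank k (Pj a b j))]
  rw [telescope a b hz hz0 s]
  exact hsr s le_rfl

lemma psub_finiteDimensional (hz : ∀ i, (∑ j, b j * a i j) ≠ 0)
    (hz0 : dualLin b ≠ (0 : MvPolynomial (Fin m) k))
    (hsr : ∀ t, s ≤ t → HF (projIdeal a) t = r) :
    FiniteDimensional k (Psub a b : Submodule k (MvPolynomial (Fin m) k)) := by
  have fdj : ∀ j : Fin (s+1), FiniteDimensional k (Pj a b (j : ℕ)) := fun j =>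
    Submodule.finiteDimensional_of_le inf_le_right
  exact Module.Finite.equiv (psubEquiv a b s hz hz0 hsr).symm

end Main4
end ApolAux

/-- if `F` is homogeneous of degree `s`, `F ∈ I(X)^⊥`, `z ∘ F = 0` and
`dim_k (R∘F) ≥ r`, then `R∘F = (I(X)+(z))^⊥` and `dim_k (R∘F) = r`. -/
theorem stmt18 [CharZero k] [IsAlgClosed k] (n r s : ℕ)
    (a : Fin r → Fin (n + 1) → k) (ha : ProjDistinct a)
    (hs : IsSocleDegree (projIdeal a) r s)
    (b : Fin (n + 1) → k) (hz : ∀ i, (∑ j, b j * a i j) ≠ 0)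
    (hGor : IsArithGorAt a (dualLin b))
    (F : MvPolynomial (Fin (n + 1)) k) (hFhom : F.IsHomogeneous s)
    (hFperp : F ∈ perp ((projIdeal a : Ideal (MvPolynomial (Fin (n + 1)) k)) : Set (MvPolynomial (Fin (n + 1)) k)))
    (hzF : apol (dualLin b) F = 0)
    (hdim : r ≤ Module.finrank k (Rspan {F})) :
    ((Rspan {F} : Submodule k (MvPolynomial (Fin (n + 1)) k)) : Set (MvPolynomial (Fin (n + 1)) k))
        = perp ((projIdeal a ⊔ Ideal.span {dualLin b} :
            Ideal (MvPolynomial (Fin (n + 1)) k)) : Set (MvPolynomial (Fin (n + 1)) k))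
    ∧ Module.finrank k (Rspan {F}) = r := by
  classical
  by_cases hr : r = 0
  · -- degenerate case: no points
    subst hr
    have htop : projIdeal a = (⊤ : Ideal (MvPolynomial (Fin (n+1)) k)) := by
      rw [projIdeal]
      exact iInf_of_empty _
    have hF0 : F = 0 := by
      have h1 : (1 : MvPolynomial (Fin (n+1)) k) ∈
          ((projIdeal a : Ideal (MvPolynomial (Fin (n+1)) k)) :
            Set (MvPolynomial (Fin (n+1)) k)) := by
        rw [htop]; trivial
      have := hFperp 1 h1
      rwa [ApolAux.apol_one] at this
    subst hF0
    have hspan : (Rspan {(0 : MvPolynomial (Fin (n+1)) k)} :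
        Submodule k (MvPolynomial (Fin (n+1)) k)) = ⊥ := by
      rw [Rspan]
      apply Submodule.span_eq_bot.mpr
      rintro G ⟨g, F', hF', rfl⟩
      have : F' = 0 := hF'
      rw [this, ApolAux.apol_zero_right]
    constructor
    · rw [hspan]
      rw [htop, top_sup_eq]
      ext G
      simp only [Submodule.bot_coe, Set.mem_singleton_iff]
      constructor
      · intro hG
        subst hG
        intro g _
        exact ApolAux.apol_zero_right g
      · intro hG
        have := hG 1 trivial
        rwa [ApolAux.apol_one] at this
    · rw [hspan, finrank_bot]
  · -- main case
    have hz0 : dualLin b ≠ (0 : MvPolynomial (Fin (n+1)) k) :=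
      ApolAux.dualLin_ne_zero (hz ⟨0, Nat.pos_of_ne_zero hr⟩)
    have hsr : ∀ t, s ≤ t → HF (projIdeal a) t = r := hs.1
    have hIeq : ApolAux.I'idl a b = (projIdeal a ⊔ Ideal.span {dualLin b} :
        Ideal (MvPolynomial (Fin (n+1)) k)) := rfl
    have hle : Rspan {F} ≤ ApolAux.Psub a b := by
      rw [Rspan, Submodule.span_le]
      rintro G ⟨g, F', hF', rfl⟩
      have hF'eq : F' = F := hF'
      subst hF'eq
      rw [SetLike.mem_coe, ApolAux.mem_Psub]
      intro h hh
      have hhF : apol h F' = 0 := by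
        obtain ⟨p, hp, q, rfl⟩ := (ApolAux.mem_I'idl a b).mp hh
        rw [ApolAux.apol_add_left, hFperp p hp, ApolAux.apol_mul, hzF,
          ApolAux.apol_zero_right, zero_add]
      calc apol h (apol g F') = apol (h * g) F' := (ApolAux.apol_mul h g F').symm
        _ = apol (g * h) F' := by rw [mul_comm]
        _ = apol g (apol h F') := ApolAux.apol_mul g h F'
        _ = 0 := by rw [hhF, ApolAux.apol_zero_right]
    have hfd : FiniteDimensional k (ApolAux.Psub a b :
        Submodule k (MvPolynomial (Fin (n+1)) k)) :=
      ApolAux.psub_finiteDimensional a b s hz hz0 hsr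
    have hfr : Module.finrank k (ApolAux.Psub a b :
        Submodule k (MvPolynomial (Fin (n+1)) k)) = r :=
      ApolAux.finrank_Psub a b s hz hz0 hsr
    have heq : Rspan {F} = ApolAux.Psub a b :=
      Submodule.eq_of_le_of_finrank_le hle (by rw [hfr]; exact hdim)
    constructor
    · rw [heq]
      ext G
      constructor
      · intro hG g hg
        exact (ApolAux.mem_Psub a b).mp hG g hg
      · intro hG
        rw [SetLike.mem_coe, ApolAux.mem_Psub]
        intro g hg
        exact hG g hg
    · rw [heq, hfr]

end
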